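/- Fix p ≥ 0 and a square-summable real sequence μ. With S_n(α) = ∑_{i=1}^∞ n² i^{1+2α} μ_i² (log i) / (i^{1+2α+2p} + n)², for every n ≥ e² and every ᾱ > 0 and every α ∈ [ᾱ − 1/log n, ᾱ], we have S_n(α) ≥ K · S_n(ᾱ) for an absolute constant K > 0 (one may take K = e^{−2}/4). -/

import Mathlib

open Real

lemma aux_core (n r R : ℝ) (hn : 0 < n) (hr : 0 < r) (hrR : r ≤ R)
    (hA : R ≤ n → Real.exp (-2) * R ≤ r)
    (hB : n ≤ R → Real.exp (-2) * n ≤ r) :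
    Real.exp (-2) / 4 * (R / (R + n) ^ 2) ≤ r / (r + n) ^ 2 := by
  have hR : 0 < R := lt_of_lt_of_le hr hrR
  have he : 0 < Real.exp (-2) := Real.exp_pos _
  have he1 : Real.exp (-2) ≤ 1 := Real.exp_le_one_iff.mpr (by norm_num)
  rw [show Real.exp (-2) / 4 * (R / (R + n) ^ 2)
      = (Real.exp (-2) * R) / (4 * (R + n) ^ 2) by rw [div_mul_div_comm],
    div_le_div_iff₀ (by positivity) (by positivity)]
  -- goal: exp(-2) * R * (r+n)^2 ≤ r * (4 * (R+n)^2)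
  rcases le_total R n with h | h
  · have h1 := hA h
    nlinarith [sq_nonneg (R + n), sq_nonneg (r + n), mul_le_mul_of_nonneg_left
      (show (r+n)^2 ≤ (R+n)^2 by nlinarith) he.le,
      mul_le_mul_of_nonneg_right h1 (sq_nonneg (R+n))]
  · have h1 := hB h
    rcases le_total r n with h2 | h2
    · -- r ≤ n ≤ R : LHS ≤ exp(-2)*R*4n^2, RHS ≥ exp(-2)*n*4*R*n*4
      nlinarith [sq_nonneg (R - n), sq_nonneg (r - n), mul_pos hR hn,
        mul_le_mul_of_nonneg_left (show (r+n)^2 ≤ 4*n^2 by nlinarith) (mul_nonneg he.le hR.le),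
        mul_le_mul_of_nonneg_right h1 (show (0:ℝ) ≤ (R+n)^2 by positivity),
        mul_le_mul_of_nonneg_left (show 4*R*n ≤ (R+n)^2 by nlinarith) (mul_nonneg he.le hn.le)]
    · -- n ≤ r ≤ R
      have s1 : Real.exp (-2) * R * (r+n)^2 ≤ Real.exp (-2) * R * (4*r^2) :=
        mul_le_mul_of_nonneg_left (by nlinarith) (mul_nonneg he.le hR.le)
      have s2 : Real.exp (-2) * R * (4*r^2) ≤ R * (4*r^2) := by nlinarith [mul_nonneg (mul_nonneg (sub_nonneg.mpr he1) hR.le) (sq_nonneg r)]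
      have s3 : R * (4*r^2) ≤ r * (4*R^2) := by nlinarith [mul_nonneg (mul_nonneg hr.le hR.le) (sub_nonneg.mpr hrR)]
      have s4 : r * (4*R^2) ≤ r * (4*(R+n)^2) := by nlinarith [mul_nonneg hr.le (mul_nonneg hR.le hn.le), mul_nonneg hr.le (sq_nonneg n)]
      linarith

lemma aux_key (n m p a b : ℝ) (hn : Real.exp 2 ≤ n) (hm : 1 ≤ m) (hp : 0 ≤ p)
    (hb : 0 < b) (hab : b - 1 / Real.log n ≤ a) (hba : a ≤ b) :
    Real.exp (-2) / 4 * (m ^ (1 + 2 * b) * Real.log m / ((m ^ (1 + 2 * b + 2 * p) + n) ^ 2))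
      ≤ m ^ (1 + 2 * a) * Real.log m / ((m ^ (1 + 2 * a + 2 * p) + n) ^ 2) := by
  have hm0 : (0:ℝ) < m := lt_of_lt_of_le one_pos hm
  have hn0 : (0:ℝ) < n := lt_of_lt_of_le (Real.exp_pos 2) hn
  have hM : 2 ≤ Real.log n := by
    calc (2:ℝ) = Real.log (Real.exp 2) := (Real.log_exp 2).symm
    _ ≤ Real.log n := Real.log_le_log (Real.exp_pos 2) hn
  have hM0 : (0:ℝ) < Real.log n := by linarith
  have hL : 0 ≤ Real.log m := Real.log_nonneg hm
  set L := Real.log m with hLdef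
  set M := Real.log n with hMdef
  set r := m ^ (1 + 2 * a + 2 * p) with hrdef
  set R := m ^ (1 + 2 * b + 2 * p) with hRdef
  have hr0 : 0 < r := Real.rpow_pos_of_pos hm0 _
  have hR0 : 0 < R := Real.rpow_pos_of_pos hm0 _
  have hrR : r ≤ R := Real.rpow_le_rpow_of_exponent_le hm (by linarith)
  have hlogr : Real.log r = (1 + 2 * a + 2 * p) * L := Real.log_rpow hm0 _
  have hlogR : Real.log R = (1 + 2 * b + 2 * p) * L := Real.log_rpow hm0 _
  have hq : M * (2 * a - 2 * b) ≥ -2 := by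
    have : M * (b - 1/M) ≤ M * a := mul_le_mul_of_nonneg_left hab hM0.le
    rw [mul_sub, mul_one_div, div_self hM0.ne'] at this
    linarith
  -- hypothesis A : R ≤ n → exp(-2) * R ≤ r
  have hA : R ≤ n → Real.exp (-2) * R ≤ r := by
    intro h
    have hlRn : (1 + 2 * b + 2 * p) * L ≤ M := by
      rw [← hlogR]; exact Real.log_le_log hR0 h
    have hLM : L ≤ M := by nlinarith
    have key : r = R * Real.exp ((2*a - 2*b) * L) := by
      rw [hrdef, hRdef, ← Real.exp_log (Real.rpow_pos_of_pos hm0 (1+2*a+2*p)),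
        ← Real.exp_log (Real.rpow_pos_of_pos hm0 (1+2*b+2*p)), ← Real.exp_add,
        Real.log_rpow hm0, Real.log_rpow hm0]
      rw [hLdef]; ring_nf
    rw [key]
    have : Real.exp (-2) ≤ Real.exp ((2*a - 2*b) * L) := by
      apply Real.exp_le_exp.mpr
      nlinarith
    nlinarith [Real.exp_pos ((2*a-2*b)*L)]
  -- hypothesis B : n ≤ R → exp(-2) * n ≤ r
  have hB : n ≤ R → Real.exp (-2) * n ≤ r := by
    intro h
    have hlRn : M ≤ (1 + 2 * b + 2 * p) * L := by
      rw [← hlogR]; exact Real.log_le_log hn0 h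
    have key : M - 2 ≤ (1 + 2 * a + 2 * p) * L := by
      nlinarith [mul_nonneg (by linarith : (0:ℝ) ≤ M * (2*a-2*b) + 2) hL,
        mul_nonneg (by linarith : (0:ℝ) ≤ 2*b + 2*p) hL,
        mul_nonneg (by linarith : (0:ℝ) ≤ (1+2*b+2*p)*L - M) (by linarith : (0:ℝ) ≤ M - 2)]
    calc Real.exp (-2) * n = Real.exp (-2) * Real.exp M := by rw [hMdef, Real.exp_log hn0]
    _ = Real.exp (M - 2) := by rw [← Real.exp_add]; ring_nf
    _ ≤ Real.exp ((1 + 2 * a + 2 * p) * L) := Real.exp_le_exp.mpr key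
    _ = r := by rw [← hlogr, Real.exp_log hr0]
  have core := aux_core n r R hn0 hr0 hrR hA hB
  have hc : (0:ℝ) < m ^ (2 * p) := Real.rpow_pos_of_pos hm0 _
  have h1b : m ^ (1 + 2 * b) = R / m ^ (2 * p) := by
    rw [eq_div_iff hc.ne', hRdef, ← Real.rpow_add hm0]
  have h1a : m ^ (1 + 2 * a) = r / m ^ (2 * p) := by
    rw [eq_div_iff hc.ne', hrdef, ← Real.rpow_add hm0]
  rw [h1a, h1b]
  have htc : 0 ≤ L / m ^ (2 * p) := div_nonneg hL hc.le
  calc Real.exp (-2) / 4 * (R / m ^ (2*p) * L / (R + n) ^ 2)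
      = (Real.exp (-2) / 4 * (R / (R + n) ^ 2)) * (L / m ^ (2*p)) := by ring
    _ ≤ (r / (r + n) ^ 2) * (L / m ^ (2*p)) := mul_le_mul_of_nonneg_right core htc
    _ = r / m ^ (2*p) * L / (r + n) ^ 2 := by ring

set_option maxHeartbeats 1000000 in
lemma aux_summ (n p a : ℝ) (hn : 0 < n) (ha : 0 < 1 + 2 * a) (hp : 0 ≤ p) (μ : ℕ → ℝ)
    (hμ : Summable fun i : ℕ => (μ (i + 1)) ^ 2) :
    Summable (fun i : ℕ => n ^ 2 * ((i : ℝ) + 1) ^ (1 + 2 * a) * (μ (i + 1)) ^ 2 *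
      Real.log ((i : ℝ) + 1) / ((((i : ℝ) + 1) ^ (1 + 2 * a + 2 * p) + n) ^ 2)) := by
  have hε : (0:ℝ) < 1 + 2 * a + 4 * p := by linarith
  refine Summable.of_nonneg_of_le (fun i => ?_) (fun i => ?_)
    (hμ.mul_left (n ^ 2 / (1 + 2*a + 4*p)))
  · have hm : (1:ℝ) ≤ (i:ℝ) + 1 := by
      have : (0:ℝ) ≤ (i:ℝ) := Nat.cast_nonneg i
      linarith
    have hm0 : (0:ℝ) < (i:ℝ) + 1 := by positivity
    have hL : 0 ≤ Real.log ((i:ℝ)+1) := Real.log_nonneg hm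
    positivity
  · set m := ((i:ℝ) + 1) with hmdef
    have hm : (1:ℝ) ≤ m := by
      have : (0:ℝ) ≤ (i:ℝ) := Nat.cast_nonneg i
      simp only [hmdef]; linarith
    have hm0 : (0:ℝ) < m := by positivity
    have hL : 0 ≤ Real.log m := Real.log_nonneg hm
    have hr0 : (0:ℝ) < m ^ (1 + 2*a + 2*p) := Real.rpow_pos_of_pos hm0 _
    have hD : (0:ℝ) < (m ^ (1 + 2*a + 2*p) + n) ^ 2 := by positivity
    rw [div_le_iff₀ hD]
    -- log m ≤ m^ε / ε
    have hlog : Real.log m ≤ m ^ (1 + 2*a + 4*p) / (1 + 2*a + 4*p) := by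
      rw [le_div_iff₀ hε]
      calc Real.log m * (1 + 2*a + 4*p) = Real.log (m ^ (1 + 2*a + 4*p)) := by
            rw [Real.log_rpow hm0]; ring
        _ ≤ m ^ (1 + 2*a + 4*p) - 1 := Real.log_le_sub_one_of_pos (Real.rpow_pos_of_pos hm0 _)
        _ ≤ m ^ (1 + 2*a + 4*p) := by linarith
    have hprod : m ^ (1 + 2*a) * m ^ (1 + 2*a + 4*p)
        = m ^ (1 + 2*a + 2*p) * m ^ (1 + 2*a + 2*p) := by
      rw [← Real.rpow_add hm0, ← Real.rpow_add hm0]; ring_nf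
    have hma : (0:ℝ) ≤ m ^ (1 + 2*a) := (Real.rpow_pos_of_pos hm0 _).le
    calc n ^ 2 * m ^ (1 + 2*a) * (μ (i+1))^2 * Real.log m
        ≤ n ^ 2 * m ^ (1 + 2*a) * (μ (i+1))^2 * (m ^ (1 + 2*a + 4*p) / (1 + 2*a + 4*p)) := by
          apply mul_le_mul_of_nonneg_left hlog; positivity
      _ = (n ^ 2 / (1 + 2*a + 4*p)) * (μ (i+1))^2 * (m ^ (1 + 2*a) * m ^ (1 + 2*a + 4*p)) := by
          ring
      _ = (n ^ 2 / (1 + 2*a + 4*p)) * (μ (i+1))^2 * (m ^ (1 + 2*a + 2*p) * m ^ (1 + 2*a + 2*p)) := by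
          rw [hprod]
      _ ≤ (n ^ 2 / (1 + 2*a + 4*p)) * (μ (i+1))^2 * ((m ^ (1 + 2*a + 2*p) + n) ^ 2) := by
          apply mul_le_mul_of_nonneg_left _ (by positivity)
          nlinarith [mul_nonneg hr0.le hn.le, sq_nonneg n]

/-- Lemma 5.1 (first inequality, in terms of S_n): there is an absolute constant
K > 0 (e.g. K = e⁻²/4) such that for every p ≥ 0, square-summable μ, n ≥ e²,
ᾱ > 0 and α ∈ [ᾱ − 1/log n, ᾱ], one has S_n(α) ≥ K S_n(ᾱ). -/
theorem stmt_13 :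
    ∃ K > (0 : ℝ), ∀ (p : ℝ), 0 ≤ p → ∀ (μ : ℕ → ℝ),
      Summable (fun i : ℕ => (μ (i + 1)) ^ 2) →
      ∀ n : ℝ, Real.exp 2 ≤ n → ∀ ᾱ > (0 : ℝ), ∀ α : ℝ,
        ᾱ - 1 / Real.log n ≤ α → α ≤ ᾱ →
        K * (∑' i : ℕ, n ^ 2 * ((i : ℝ) + 1) ^ (1 + 2 * ᾱ) * (μ (i + 1)) ^ 2 *
              Real.log ((i : ℝ) + 1) / ((((i : ℝ) + 1) ^ (1 + 2 * ᾱ + 2 * p) + n) ^ 2))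
          ≤ ∑' i : ℕ, n ^ 2 * ((i : ℝ) + 1) ^ (1 + 2 * α) * (μ (i + 1)) ^ 2 *
              Real.log ((i : ℝ) + 1) / ((((i : ℝ) + 1) ^ (1 + 2 * α + 2 * p) + n) ^ 2) := by
  refine ⟨Real.exp (-2) / 4, by positivity, fun p hp μ hμ n hn ᾱ hᾱ α hab hba => ?_⟩
  have hn0 : (0:ℝ) < n := lt_of_lt_of_le (Real.exp_pos 2) hn
  have hM : 2 ≤ Real.log n := by
    calc (2:ℝ) = Real.log (Real.exp 2) := (Real.log_exp 2).symm
    _ ≤ Real.log n := Real.log_le_log (Real.exp_pos 2) hn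
  have hα : 0 < 1 + 2 * α := by
    have h1 : 1 / Real.log n ≤ 1 / 2 := by
      apply one_div_le_one_div_of_le <;> linarith
    linarith
  have hᾱ' : 0 < 1 + 2 * ᾱ := by linarith
  have hsum_b := aux_summ n p ᾱ hn0 hᾱ' hp μ hμ
  have hsum_a := aux_summ n p α hn0 hα hp μ hμ
  rw [← tsum_mul_left]
  refine Summable.tsum_le_tsum (fun i => ?_) (hsum_b.mul_left _) hsum_a
  have hm : (1:ℝ) ≤ (i:ℝ) + 1 := by
    have : (0:ℝ) ≤ (i:ℝ) := Nat.cast_nonneg i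
    linarith
  have key := aux_key n ((i:ℝ)+1) p α ᾱ hn hm hp hᾱ hab hba
  have hnonneg : (0:ℝ) ≤ n ^ 2 * (μ (i+1))^2 := by positivity
  have H := mul_le_mul_of_nonneg_left key hnonneg
  calc Real.exp (-2) / 4 * (n ^ 2 * ((i:ℝ) + 1) ^ (1 + 2 * ᾱ) * (μ (i + 1)) ^ 2 *
        Real.log ((i:ℝ) + 1) / ((((i:ℝ) + 1) ^ (1 + 2 * ᾱ + 2 * p) + n) ^ 2))
      = n ^ 2 * (μ (i+1))^2 * (Real.exp (-2) / 4 * (((i:ℝ)+1) ^ (1 + 2 * ᾱ) *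
        Real.log ((i:ℝ)+1) / ((((i:ℝ)+1) ^ (1 + 2 * ᾱ + 2 * p) + n) ^ 2))) := by ring
    _ ≤ n ^ 2 * (μ (i+1))^2 * (((i:ℝ)+1) ^ (1 + 2 * α) * Real.log ((i:ℝ)+1) /
        ((((i:ℝ)+1) ^ (1 + 2 * α + 2 * p) + n) ^ 2)) := H
    _ = n ^ 2 * ((i:ℝ) + 1) ^ (1 + 2 * α) * (μ (i + 1)) ^ 2 * Real.log ((i:ℝ) + 1) /
        ((((i:ℝ) + 1) ^ (1 + 2 * α + 2 * p) + n) ^ 2) := by ring
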